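/- Let f : F_2^k → S be a function with 2 ≤ |Im(f)| ≤ k, and let t_d ≤ t_f be natural numbers. Then the optimal redundancy satisfies r_f(k, t_d, t_f) ≥ 2t_f + t_d. -/

import Mathlib

open Finset

lemma ham_as_sum {F : Type*} [DecidableEq F] {n : ℕ} (x y : Fin n → F) :
    hammingDist x y = ∑ i, if x i = y i then 0 else 1 := by
  simp [hammingDist, Finset.card_filter]

lemma ham_split {F : Type*} [DecidableEq F] {k r : ℕ} (x y : Fin (k+r) → F) :
    hammingDist x y =
      hammingDist (x ∘ Fin.castAdd r) (y ∘ Fin.castAdd r) +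
      hammingDist (x ∘ Fin.natAdd k) (y ∘ Fin.natAdd k) := by
  simp only [ham_as_sum, Function.comp]
  exact Fin.sum_univ_add _

lemma ham_three {r : ℕ} (a b c : Fin r → ZMod 2) :
    hammingDist a b + hammingDist b c + hammingDist a c ≤ 2 * r := by
  simp only [ham_as_sum]
  rw [← Finset.sum_add_distrib, ← Finset.sum_add_distrib]
  calc _ ≤ ∑ _i : Fin r, 2 := Finset.sum_le_sum (fun i _ => by
          have : ∀ x y z : ZMod 2,
              ((if x = y then 0 else 1) + (if y = z then 0 else 1)) + (if x = z then 0 else 1) ≤ 2 := by decide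
          exact this _ _ _)
    _ = 2 * r := by simp [mul_comm]

lemma zmod2_ne {a b : ZMod 2} (h : a ≠ b) : b = a + 1 := by revert h; revert a b; decide

lemma ham_update {k : ℕ} (x : Fin k → ZMod 2) (i : Fin k) :
    hammingDist x (Function.update x i (x i + 1)) = 1 := by
  have : (Finset.univ.filter fun t => x t ≠ Function.update x i (x i + 1) t) = ({i} : Finset (Fin k)) := by
    ext t
    rcases eq_or_ne t i with rfl | ht
    · have : ∀ a : ZMod 2, a ≠ a + 1 := by decide
      simp [Function.update_self, this]
    · simp [Function.update_of_ne ht, ht]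
  simp [hammingDist, this]

lemma exists_adj_aux {S : Type*} {k : ℕ} (f : (Fin k → ZMod 2) → S) :
    ∀ n (u v : Fin k → ZMod 2), hammingDist u v ≤ n → f u ≠ f v →
    ∃ (w : Fin k → ZMod 2) (i : Fin k), f w ≠ f (Function.update w i (w i + 1)) := by
  intro n
  induction n with
  | zero =>
    intro u v h hne
    exact absurd (hammingDist_eq_zero.mp (Nat.le_zero.mp h)) (fun h => hne (h ▸ rfl))
  | succ n ih =>
    intro u v h hne
    rcases eq_or_ne u v with rfl | huv
    · exact absurd rfl hne
    · obtain ⟨i, hi⟩ := Function.ne_iff.mp huv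
      have hvi : v i = u i + 1 := zmod2_ne hi
      set u' := Function.update u i (v i) with hu'
      by_cases hf : f u = f u'
      · refine ih u' v ?_ (hf ▸ hne)
        have hsub : (Finset.univ.filter fun t => u' t ≠ v t) ⊆
            (Finset.univ.filter fun t => u t ≠ v t).erase i := by
          intro t ht
          simp only [mem_filter, mem_univ, true_and] at ht
          rcases eq_or_ne t i with rfl | hti
          · simp [hu', Function.update_self] at ht
          · simp only [hu', Function.update_of_ne hti] at ht
            simp [mem_erase, hti, ht]
        have hmem : i ∈ (Finset.univ.filter fun t => u t ≠ v t) := by simp [hi]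
        have := Finset.card_le_card hsub
        rw [Finset.card_erase_of_mem hmem] at this
        have h2 : hammingDist u v ≤ n + 1 := h
        unfold hammingDist at *
        omega
      · exact ⟨u, i, by rwa [hu', hvi] at hf⟩

lemma exists_adj {S : Type*} {k : ℕ} (f : (Fin k → ZMod 2) → S)
    (h : ∃ u v, f u ≠ f v) :
    ∃ (u : Fin k → ZMod 2) (i : Fin k), f u ≠ f (Function.update u i (u i + 1)) := by
  obtain ⟨u, v, huv⟩ := h
  exact exists_adj_aux f (hammingDist u v) u v le_rfl huv

lemma rep_code {k : ℕ} (hk : 0 < k) (m : ℕ) :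
    ∃ c : (Fin k → ZMod 2) → (Fin (k + m * k) → ZMod 2),
      (∀ u i, c u (Fin.castAdd (m * k) i) = u i) ∧
      (∀ u v : Fin k → ZMod 2, u ≠ v → m + 1 ≤ hammingDist (c u) (c v)) := by
  refine ⟨fun u i => u ⟨i.val % k, Nat.mod_lt _ hk⟩, ?_, ?_⟩
  · intro u i
    exact congrArg u (Fin.ext (by simp [Nat.mod_eq_of_lt i.isLt]))
  · intro u v huv
    obtain ⟨a, ha⟩ := Function.ne_iff.mp huv
    set g : Fin (m + 1) → Fin (k + m * k) := fun t =>
      ⟨a.val + t.val * k, by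
        have h1 : t.val * k ≤ m * k := Nat.mul_le_mul_right k (by omega)
        have h2 := a.isLt
        omega⟩ with hg
    have hmod : ∀ t : Fin (m + 1), (⟨(g t).val % k, Nat.mod_lt _ hk⟩ : Fin k) = a := by
      intro t
      refine Fin.ext ?_
      simp only [hg]
      rw [Nat.add_mul_mod_self_right, Nat.mod_eq_of_lt a.isLt]
    have hcard : (univ : Finset (Fin (m + 1))).card ≤
        (univ.filter fun i : Fin (k + m * k) =>
          u ⟨i.val % k, Nat.mod_lt _ hk⟩ ≠ v ⟨i.val % k, Nat.mod_lt _ hk⟩).card := by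
      refine Finset.card_le_card_of_injOn g ?_ ?_
      · intro t _
        simp only [Finset.mem_coe, mem_filter, mem_univ, true_and]
        rw [show (⟨(g t).val % k, Nat.mod_lt _ hk⟩ : Fin k) = a from hmod t]
        exact ha
      · intro t1 _ t2 _ h
        have := congrArg Fin.val h
        simp only [hg] at this
        exact Fin.ext (Nat.eq_of_mul_eq_mul_right hk (by omega))
    simpa [hammingDist] using hcard

/-- An `(f, t_d, t_f)`-FCC over `F_2` (stated for general `d_d = 2t_d+1`, `d_f = 2t_f+1`). -/
def IsFCC {F S : Type*} [Fintype F] [DecidableEq F] {k r : ℕ}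
    (f : (Fin k → F) → S) (dd df : ℕ)
    (c : (Fin k → F) → (Fin (k + r) → F)) : Prop :=
  (∀ u i, c u (Fin.castAdd r i) = u i) ∧
  (∀ u v, u ≠ v → dd ≤ hammingDist (c u) (c v)) ∧
  (∀ u v, f u ≠ f v → df ≤ hammingDist (c u) (c v))

/-- The optimal redundancy `r_f(k, t_d, t_f)`. -/
noncomputable def optRedundancy {F S : Type*} [Fintype F] [DecidableEq F] {k : ℕ}
    (f : (Fin k → F) → S) (dd df : ℕ) : ℕ :=
  sInf {r : ℕ | ∃ c : (Fin k → F) → (Fin (k + r) → F), IsFCC f dd df c}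

/-- For `f : F_2^k → S` with `2 ≤ |Im(f)| ≤ k` and `t_d ≤ t_f`,
`r_f(k, t_d, t_f) ≥ 2 t_f + t_d`. -/
theorem optRedundancy_ge_two_tf_add_td
    {S : Type*} {k : ℕ} (f : (Fin k → ZMod 2) → S) (td tf : ℕ) (htdtf : td ≤ tf)
    (hIm2 : 2 ≤ Nat.card (Set.range f)) (hImk : Nat.card (Set.range f) ≤ k) :
    2 * tf + td ≤ optRedundancy f (2 * td + 1) (2 * tf + 1) := by
  have hk2 : 2 ≤ k := le_trans hIm2 hImk
  have hk : 0 < k := by omega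
  -- f is nonconstant
  have hnc : ∃ u v, f u ≠ f v := by
    by_contra hcon
    push_neg at hcon
    have hrange : Set.range f = {f (fun _ => 0)} := by
      ext s
      simp only [Set.mem_range, Set.mem_singleton_iff]
      constructor
      · rintro ⟨u, rfl⟩; exact hcon u _
      · rintro rfl; exact ⟨_, rfl⟩
    rw [hrange] at hIm2
    simp at hIm2
  -- the set of achievable redundancies is nonempty
  have hne : {r : ℕ | ∃ c : (Fin k → ZMod 2) → (Fin (k + r) → ZMod 2),
      IsFCC f (2 * td + 1) (2 * tf + 1) c}.Nonempty := by
    obtain ⟨c, hsys, hdist⟩ := rep_code hk (2 * tf)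
    refine ⟨2 * tf * k, c, hsys, ?_, ?_⟩
    · intro u v huv
      have := hdist u v huv
      omega
    · intro u v huv
      have hne' : u ≠ v := fun h => huv (h ▸ rfl)
      have := hdist u v hne'
      omega
  refine le_csInf hne ?_
  rintro r ⟨c, hsys, hdd, hdf⟩
  -- head of each codeword is the message
  have hhead : ∀ u : Fin k → ZMod 2, (c u) ∘ Fin.castAdd r = u := by
    intro u; funext i; exact hsys u i
  have hD : ∀ u v : Fin k → ZMod 2, hammingDist (c u) (c v) =
      hammingDist u v + hammingDist ((c u) ∘ Fin.natAdd k) ((c v) ∘ Fin.natAdd k) := by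
    intro u v
    have := ham_split (c u) (c v)
    rwa [hhead u, hhead v] at this
  -- adjacent pair with different f values
  obtain ⟨u, i, hfu⟩ := exists_adj f hnc
  set v := Function.update u i (u i + 1) with hv
  -- second coordinate j ≠ i
  obtain ⟨j, hj⟩ := Fintype.exists_ne_of_one_lt_card (by simp; omega) i
  set w := Function.update v j (v j + 1) with hw
  -- basic distances
  have huv1 : hammingDist u v = 1 := ham_update u i
  have hvw1 : hammingDist v w = 1 := ham_update v j
  have huw2 : hammingDist u w ≤ 2 := by
    have hsub : (Finset.univ.filter fun t => u t ≠ w t) ⊆ ({i, j} : Finset (Fin k)) := by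
      intro t ht
      simp only [mem_filter, mem_univ, true_and] at ht
      by_contra htij
      simp only [mem_insert, mem_singleton, not_or] at htij
      apply ht
      rw [hw, hv, Function.update_of_ne htij.2, Function.update_of_ne htij.1]
    calc hammingDist u w ≤ ({i, j} : Finset (Fin k)).card := Finset.card_le_card hsub
      _ ≤ 2 := Finset.card_insert_le _ _ |>.trans (by simp)
  have hone : ∀ a : ZMod 2, a ≠ a + 1 := by decide
  have huv_ne : u ≠ v := fun h => by
    have := congrFun h i
    rw [hv, Function.update_self] at this
    exact hone _ this
  have hvw_ne : v ≠ w := fun h => by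
    have := congrFun h j
    rw [hw, Function.update_self] at this
    exact hone _ this
  have huw_ne : u ≠ w := fun h => by
    have := congrFun h j
    rw [hw, Function.update_self, hv, Function.update_of_ne hj] at this
    exact hone _ this
  -- tail distances
  set Tuv := hammingDist ((c u) ∘ Fin.natAdd k) ((c v) ∘ Fin.natAdd k) with hTuv
  set Tvw := hammingDist ((c v) ∘ Fin.natAdd k) ((c w) ∘ Fin.natAdd k) with hTvw
  set Tuw := hammingDist ((c u) ∘ Fin.natAdd k) ((c w) ∘ Fin.natAdd k) with hTuw
  have htri : Tuv + Tvw + Tuw ≤ 2 * r := ham_three _ _ _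
  have hDuv := hD u v
  have hDvw := hD v w
  have hDuw := hD u w
  have h1 : 2 * tf + 1 ≤ hammingDist (c u) (c v) := hdf u v hfu
  by_cases hfw : f w = f u
  · -- f w = f u ≠ f v
    have h2 : 2 * tf + 1 ≤ hammingDist (c v) (c w) := by
      refine hdf v w (fun h => hfu ?_)
      rw [← hfw, h]
    have h3 : 2 * td + 1 ≤ hammingDist (c u) (c w) := hdd u w huw_ne
    omega
  · -- f w ≠ f u
    have h2 : 2 * tf + 1 ≤ hammingDist (c u) (c w) := hdf u w (fun h => hfw h.symm)
    have h3 : 2 * td + 1 ≤ hammingDist (c v) (c w) := hdd v w hvw_ne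
    omega
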